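/- Let p ∈ ℝ[x_1,...,x_n] of degree d satisfy p(x) = 1 whenever s(x) = x_1 + ... + x_n = 1. Writing p = Σ_{|α|=d} c_α x^α + Σ_{|α|<d} c_α x^α, one has the identity p(x) = s(x)^d + Σ_{|α|<d} c_α x^α (1 - s(x)^{d-|α|}). -/

import Mathlib

open MvPolynomial

/-- The "undoing" identity: if `p` has degree `d` and `p = 1` on the hyperplane
`s = 1` (where `s = x_1 + ... + x_n`), then
`p = s^d + ∑_{|α|<d} c_α x^α (1 - s^{d-|α|})`. -/
theorem stmt_6 (n : ℕ) (hn : 1 ≤ n) (p : MvPolynomial (Fin n) ℝ) (d : ℕ)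
    (hd : d = p.totalDegree)
    (hone : ∀ x : Fin n → ℝ, (∑ i, x i) = 1 → eval x p = 1) :
    p = (∑ i, X i) ^ d +
      ∑ α ∈ p.support.filter (fun α => (∑ i, α i) < d),
        (monomial α (p.coeff α)) * (1 - (∑ i, X i) ^ (d - ∑ i, α i)) := by
  set s : MvPolynomial (Fin n) ℝ := ∑ i, X i with hs
  have hdeg : ∀ α ∈ p.support, (∑ i, α i) ≤ d := by
    intro α hα
    have h1 := MvPolynomial.le_totalDegree hα
    rw [hd]
    rwa [Finsupp.sum_fintype _ _ (fun _ => rfl)] at h1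
  set h : MvPolynomial (Fin n) ℝ :=
    ∑ α ∈ p.support, monomial α (p.coeff α) * s ^ (d - ∑ i, α i) with hh
  have hevs : ∀ y : Fin n → ℝ, eval y s = ∑ i, y i := by
    intro y; simp [hs]
  have main : ∀ y : Fin n → ℝ, (∑ i, y i) ≠ 0 → eval y h = (∑ i, y i) ^ d := by
    intro y ht
    set t := ∑ i, y i with htt
    have h1 : eval (fun i => y i / t) p = 1 := by
      apply hone
      rw [← Finset.sum_div, ← htt, div_self ht]
    have h2 : eval y h = ∑ α ∈ p.support, p.coeff α * (∏ i, y i ^ α i) * t ^ (d - ∑ i, α i) := by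
      rw [hh, map_sum]
      refine Finset.sum_congr rfl fun α hα => ?_
      simp [eval_monomial, Finsupp.prod_pow, hevs, mul_assoc]
      exact Or.inl (Or.inl rfl)
    calc eval y h = t ^ d * eval (fun i => y i / t) p := by
          rw [h2, eval_eq', Finset.mul_sum]
          refine Finset.sum_congr rfl fun α hα => ?_
          have h3 : ∏ i, (y i / t) ^ α i = (∏ i, y i ^ α i) / t ^ (∑ i, α i) := by
            simp [div_pow, Finset.prod_div_distrib, Finset.prod_pow_eq_pow_sum]
          rw [h3, pow_sub₀ t ht (hdeg α hα)]
          field_simp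
      _ = t ^ d := by rw [h1, mul_one]
  have key : h = s ^ d := by
    apply MvPolynomial.funext
    intro x
    by_cases hx : (∑ i, x i) = 0
    · set u : Fin n → ℝ := fun i => if i = ⟨0, hn⟩ then 1 else 0 with hu
      have hsu : ∑ i, u i = 1 := by simp [hu]
      set g : Fin n → Polynomial ℝ := fun i => Polynomial.C (x i) + Polynomial.C (u i) * Polynomial.X with hg
      set Q : Polynomial ℝ := MvPolynomial.aeval g (h - s ^ d) with hQ
      have hQr : ∀ r : ℝ, Q.eval r = eval (fun i => x i + u i * r) (h - s ^ d) := by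
        intro r
        have := congrFun (congrArg (DFunLike.coe) (MvPolynomial.comp_aeval (f := g)
          (φ := Polynomial.aeval r))) (h - s ^ d)
        simp only [AlgHom.coe_comp, Function.comp_apply] at this
        rw [hQ, ← Polynomial.coe_aeval_eq_eval, this]
        have : (fun i => (Polynomial.aeval r) (g i)) = fun i => x i + u i * r := by
          funext i; simp [hg]
        rw [this]
        rw [MvPolynomial.aeval_def, Algebra.algebraMap_self]
        rfl
      have hQ0 : Q = 0 := by
        apply Polynomial.eq_zero_of_infinite_isRoot
        apply Set.Infinite.mono (s := {r : ℝ | r ≠ 0})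
        · intro r hr
          have hsum : ∑ i, (x i + u i * r) = r := by
            rw [Finset.sum_add_distrib, hx, ← Finset.sum_mul, hsu]
            ring
          simp only [Set.mem_setOf_eq, Polynomial.IsRoot, hQr r, map_sub]
          rw [main _ (by rw [hsum]; exact hr), map_pow, hevs, hsum]
          ring
        · exact Set.infinite_of_not_bddAbove (by
            intro ⟨b, hb⟩
            have h1 := hb (show (max b 0) + 1 ∈ {r : ℝ | r ≠ 0} by
              simp [Set.mem_setOf_eq]; positivity)
            have h2 : b ≤ max b 0 := le_max_left _ _
            linarith)
      have := hQr 0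
      rw [hQ0] at this
      simp only [Polynomial.eval_zero, mul_zero, add_zero] at this
      have h4 : eval x h - eval x (s ^ d) = 0 := by
        rw [← map_sub]; exact this.symm
      linarith [h4]
    · rw [main x hx, map_pow, hevs]
  have hfilter : ∑ α ∈ p.support.filter (fun α => (∑ i, α i) < d),
      (monomial α (p.coeff α)) * (1 - s ^ (d - ∑ i, α i)) =
      ∑ α ∈ p.support, (monomial α (p.coeff α)) * (1 - s ^ (d - ∑ i, α i)) := by
    apply Finset.sum_filter_of_ne
    intro α hα hne
    by_contra hlt
    push_neg at hlt
    have : d - (∑ i, α i) = 0 := Nat.sub_eq_zero_of_le hlt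
    rw [this] at hne
    simp at hne
  rw [hfilter]
  have hsplit : ∑ α ∈ p.support, (monomial α (p.coeff α)) * (1 - s ^ (d - ∑ i, α i)) =
      p - h := by
    have hc : ∀ α ∈ p.support, (monomial α (p.coeff α)) * (1 - s ^ (d - ∑ i, α i)) =
        monomial α (p.coeff α) - monomial α (p.coeff α) * s ^ (d - ∑ i, α i) :=
      fun α _ => by ring
    rw [Finset.sum_congr rfl hc, Finset.sum_sub_distrib,
      MvPolynomial.support_sum_monomial_coeff, hh]
  rw [hsplit, ← key]
  ring
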